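/- Let f be holomorphic on an open set containing the closed disk D̄(z₀, r) except for a finite set of poles in the open disk, with f holomorphic at z₀. If for every entire function h, f(z₀)h(z₀) = (1/(2πi)) ∮_γ f(z)h(z)/(z − z₀) dz (γ the circle |z − z₀| = r), then f has no poles in D(z₀, r), i.e., f extends holomorphically to the open disk. -/

import Mathlib

open Complex Metric Filter

private lemma diffProd (M : Multiset ℂ) :
    Differentiable ℂ fun z => (M.map (fun w => z - w)).prod := by
  induction M using Multiset.induction with
  | empty => simpa using differentiable_const (1 : ℂ)
  | cons a M ih =>
    have h : (fun z => ((a ::ₘ M).map (fun w => z - w)).prod)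
        = fun z => (z - a) * (M.map (fun w => z - w)).prod := by
      funext z; simp [Multiset.map_cons, Multiset.prod_cons]
    rw [h]
    exact (differentiable_id.sub_const a).mul ih

private lemma prodNeZero {M : Multiset ℂ} {z : ℂ} (h : ∀ w ∈ M, z ≠ w) :
    (M.map (fun w => z - w)).prod ≠ 0 := by
  refine Multiset.prod_ne_zero ?_
  intro h0
  rcases Multiset.mem_map.mp h0 with ⟨w, hw, hzw⟩
  exact h w hw (sub_eq_zero.mp hzw)

private lemma sphere_ne_ball {z₀ : ℂ} {r : ℝ} {z w : ℂ} (hz : z ∈ sphere z₀ r)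
    (hw : w ∈ ball z₀ r) : z ≠ w := by
  intro h
  subst h
  rw [mem_sphere] at hz
  rw [mem_ball] at hw
  exact absurd hz (ne_of_lt hw)

private lemma key (z₀ : ℂ) (r : ℝ) (hr : 0 < r) (M : Multiset ℂ)
    (hM : ∀ w ∈ M, w ∈ ball z₀ r) (G : ℂ → ℂ) (U : Set ℂ) (hUo : IsOpen U)
    (hUs : closedBall z₀ r ⊆ U) (hG : DifferentiableOn ℂ G U)
    (hint : ∀ q : ℂ → ℂ, Differentiable ℂ q →
      (∮ z in C(z₀, r), G z * q z / (M.map (fun w => z - w)).prod) = 0) :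
    ∃ H : ℂ → ℂ, DifferentiableOn ℂ H U ∧
      ∀ z, G z = H z * (M.map (fun w => z - w)).prod := by
  induction M using Multiset.induction generalizing G with
  | empty => exact ⟨G, hG, fun z => by simp⟩
  | cons w M ih =>
    have hw : w ∈ ball z₀ r := hM w (Multiset.mem_cons_self _ _)
    -- nonvanishing on the sphere
    have hne : ∀ z ∈ sphere z₀ r, z - w ≠ 0 := fun z hz =>
      sub_ne_zero.mpr (sphere_ne_ball hz hw)
    have hPne : ∀ z ∈ sphere z₀ r, (M.map (fun w' => z - w')).prod ≠ 0 := fun z hz =>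
      prodNeZero fun w' hw' => sphere_ne_ball hz (hM w' (Multiset.mem_cons_of_mem hw'))
    -- G w = 0
    have h1 := hint _ (diffProd M)
    have h2 : (∮ z in C(z₀, r),
        G z * (M.map (fun w' => z - w')).prod / (((w ::ₘ M)).map (fun w' => z - w')).prod)
        = ∮ z in C(z₀, r), (z - w)⁻¹ • G z := by
      refine circleIntegral.integral_congr hr.le fun z hz => ?_
      have h3 := hne z hz
      have h4 := hPne z hz
      simp only [Multiset.map_cons, Multiset.prod_cons, smul_eq_mul]
      field_simp
    have h5 := (hG.mono hUs).circleIntegral_sub_inv_smul hw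
    rw [h2, h5, smul_eq_mul] at h1
    have hGw : G w = 0 := by
      rcases mul_eq_zero.mp h1 with h | h
      · exact absurd h Complex.two_pi_I_ne_zero
      · exact h
    -- factor
    set G₁ := dslope G w with hG₁def
    have hfac : ∀ z, G z = (z - w) * G₁ z := by
      intro z
      have := sub_smul_dslope G w z
      rw [smul_eq_mul, hGw, sub_zero] at this
      exact this.symm
    have hG₁ : DifferentiableOn ℂ G₁ U :=
      (differentiableOn_dslope (hUo.mem_nhds (hUs (ball_subset_closedBall hw)))).mpr hG
    have hint₁ : ∀ q : ℂ → ℂ, Differentiable ℂ q →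
        (∮ z in C(z₀, r), G₁ z * q z / (M.map (fun w' => z - w')).prod) = 0 := by
      intro q hq
      rw [← hint q hq]
      refine circleIntegral.integral_congr hr.le fun z hz => ?_
      have h3 := hne z hz
      have h4 := hPne z hz
      simp only [Multiset.map_cons, Multiset.prod_cons]
      rw [hfac z]
      field_simp
    obtain ⟨H, hH, hHfac⟩ := ih (fun w' hw' => hM w' (Multiset.mem_cons_of_mem hw')) G₁ hG₁ hint₁
    refine ⟨H, hH, fun z => ?_⟩
    rw [hfac z, hHfac z]
    simp only [Multiset.map_cons, Multiset.prod_cons]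
    ring

theorem stmt_15 (f : ℂ → ℂ) (U : Set ℂ) (z₀ : ℂ) (r : ℝ) (hr : 0 < r)
    (hU : IsOpen U) (hsub : closedBall z₀ r ⊆ U)
    (S : Set ℂ) (hS : S.Finite) (hSball : S ⊆ ball z₀ r) (hz₀ : z₀ ∉ S)
    (hf : DifferentiableOn ℂ f (U \ S))
    (hpole : ∀ w ∈ S, ∃ n : ℕ, ∃ L : ℂ,
      Tendsto (fun z => (z - w) ^ n * f z) (nhdsWithin w {w}ᶜ) (nhds L))
    (htest : ∀ h : ℂ → ℂ, Differentiable ℂ h →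
      f z₀ * h z₀ = (2 * Real.pi * Complex.I)⁻¹ *
        (∮ z in C(z₀, r), f z * h z / (z - z₀))) :
    ∃ g : ℂ → ℂ, DifferentiableOn ℂ g (ball z₀ r) ∧
      ∀ z ∈ ball z₀ r \ S, g z = f z := by
  classical
  -- choose pole orders
  have hpole' : ∀ w : ℂ, ∃ n : ℕ, w ∈ S → ∃ L : ℂ,
      Tendsto (fun z => (z - w) ^ n * f z) (nhdsWithin w {w}ᶜ) (nhds L) := by
    intro w
    by_cases hw : w ∈ S
    · obtain ⟨n, L, h⟩ := hpole w hw
      exact ⟨n, fun _ => ⟨L, h⟩⟩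
    · exact ⟨0, fun h => absurd h hw⟩
  choose n hn using hpole'
  -- the multiset of roots
  set M : Multiset ℂ := hS.toFinset.val.bind (fun a => Multiset.replicate (n a) a) with hMdef
  have hMmem : ∀ w' ∈ M, w' ∈ S := by
    intro w' hw'
    rcases Multiset.mem_bind.mp hw' with ⟨a, ha, hrep⟩
    rw [Multiset.eq_of_mem_replicate hrep]
    exact hS.mem_toFinset.mp ha
  have hMball : ∀ w' ∈ M, w' ∈ ball z₀ r := fun w' hw' => hSball (hMmem w' hw')
  set P : ℂ → ℂ := fun z => (M.map (fun w => z - w)).prod with hPdef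
  set F : ℂ → ℂ := fun z => P z * f z with hFdef
  have hPdiff : Differentiable ℂ P := diffProd M
  have hFdiff : DifferentiableOn ℂ F (U \ S) :=
    (hPdiff.differentiableOn).mul hf
  -- the global extension G
  set G : ℂ → ℂ := fun z => if z ∈ S then limUnder (nhdsWithin z {z}ᶜ) F else F z with hGdef
  have hUSopen : IsOpen (U \ S) := hU.sdiff hS.isClosed
  have hG : DifferentiableOn ℂ G U := by
    intro x hx
    by_cases hxS : x ∈ S
    · -- removable singularity at x
      have hxb : x ∈ ball z₀ r := hSball hxS
      -- factor P near x
      have hxF : x ∈ hS.toFinset := hS.mem_toFinset.mpr hxS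
      set Mx : Multiset ℂ := (hS.toFinset.erase x).val.bind (fun a => Multiset.replicate (n a) a)
        with hMxdef
      have hsplit : M = Multiset.replicate (n x) x + Mx := by
        have h1 : hS.toFinset.val = x ::ₘ (hS.toFinset.erase x).val := by
          rw [Finset.erase_val]
          exact (Multiset.cons_erase (by simpa using hxF)).symm
        rw [hMdef, hMxdef, h1, Multiset.cons_bind]
      set Px : ℂ → ℂ := fun z => (Mx.map (fun w => z - w)).prod with hPxdef
      have hPfact : ∀ z, P z = (z - x) ^ (n x) * Px z := by
        intro z
        rw [hPdef]
        simp only [hsplit, Multiset.map_add, Multiset.prod_add, Multiset.map_replicate,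
          Multiset.prod_replicate, hPxdef]
      obtain ⟨L, hL⟩ := hn x hxS
      have hPxc : Tendsto Px (nhdsWithin x {x}ᶜ) (nhds (Px x)) :=
        ((diffProd Mx).continuous.tendsto x).mono_left nhdsWithin_le_nhds
      have htend : Tendsto F (nhdsWithin x {x}ᶜ) (nhds (Px x * L)) := by
        have h1 := hPxc.mul hL
        have h2 : F = fun z => Px z * ((z - x) ^ (n x) * f z) := by
          funext z
          rw [hFdef]
          simp only [hPfact z]
          ring
        rw [h2]
        exact h1
      -- the set on which we remove the singularity
      set V : Set ℂ := U \ (S \ {x}) with hVdef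
      have hVopen : IsOpen V := hU.sdiff (hS.subset Set.diff_subset).isClosed
      have hxV : x ∈ V := ⟨hx, fun h => h.2 rfl⟩
      have hVnhds : V ∈ nhds x := hVopen.mem_nhds hxV
      have hVsub : V \ {x} ⊆ U \ S := by
        rintro z ⟨⟨hzU, hz1⟩, hz2⟩
        exact ⟨hzU, fun hzS => hz1 ⟨hzS, hz2⟩⟩
      have hbdd : IsBoundedUnder (· ≤ ·) (nhdsWithin x {x}ᶜ) fun z => ‖F z - F x‖ :=
        ((htend.sub_const (F x)).norm).isBoundedUnder_le
      have hupd : DifferentiableOn ℂ (Function.update F x (limUnder (nhdsWithin x {x}ᶜ) F)) V :=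
        Complex.differentiableOn_update_limUnder_of_isLittleO hVnhds
          (hFdiff.mono hVsub) hbdd.isLittleO_sub_self_inv
      have hda : DifferentiableAt ℂ (Function.update F x (limUnder (nhdsWithin x {x}ᶜ) F)) x :=
        hupd.differentiableAt hVnhds
      have heq : G =ᶠ[nhds x] Function.update F x (limUnder (nhdsWithin x {x}ᶜ) F) := by
        refine Filter.eventuallyEq_of_mem hVnhds fun z hz => ?_
        by_cases hzx : z = x
        · subst hzx
          rw [hGdef]
          simp [hxS, Function.update_self]
        · have hzS : z ∉ S := fun h => hz.2 ⟨h, hzx⟩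
          rw [hGdef]
          simp [hzS, Function.update_of_ne hzx]
      exact (hda.congr_of_eventuallyEq heq).differentiableWithinAt
    · have hxUS : x ∈ U \ S := ⟨hx, hxS⟩
      have hda : DifferentiableAt ℂ F x := hFdiff.differentiableAt (hUSopen.mem_nhds hxUS)
      have heq : G =ᶠ[nhds x] F := by
        refine Filter.eventuallyEq_of_mem (hUSopen.mem_nhds hxUS) fun z hz => ?_
        rw [hGdef]
        simp [hz.2]
      exact (hda.congr_of_eventuallyEq heq).differentiableWithinAt
  -- the integral hypothesis for `key`
  have hint : ∀ q : ℂ → ℂ, Differentiable ℂ q →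
      (∮ z in C(z₀, r), G z * q z / (M.map (fun w => z - w)).prod) = 0 := by
    intro q hq
    have hh : Differentiable ℂ (fun z => (z - z₀) * q z) :=
      (differentiable_id.sub_const z₀).mul hq
    have h1 := htest _ hh
    rw [sub_self, zero_mul, mul_zero] at h1
    have h2 : (∮ z in C(z₀, r), f z * ((z - z₀) * q z) / (z - z₀)) = 0 := by
      rcases mul_eq_zero.mp h1.symm with h | h
      · exact absurd h (inv_ne_zero Complex.two_pi_I_ne_zero)
      · exact h
    rw [← h2]
    refine circleIntegral.integral_congr hr.le fun z hz => ?_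
    have hz0 : z - z₀ ≠ 0 := sub_ne_zero.mpr (sphere_ne_ball hz (mem_ball_self hr))
    have hzS : z ∉ S := fun h => (ne_of_lt (mem_ball.mp (hSball h))) (mem_sphere.mp hz)
    have hPz : (M.map (fun w => z - w)).prod ≠ 0 :=
      prodNeZero fun w hw => sphere_ne_ball hz (hMball w hw)
    have hGz : G z = P z * f z := by rw [hGdef]; simp [hzS, hFdef]
    rw [hGz, hPdef]
    field_simp
  obtain ⟨H, hH, hHfac⟩ := key z₀ r hr M hMball G U hU hsub hG hint
  refine ⟨H, hH.mono ((ball_subset_closedBall).trans hsub), ?_⟩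
  rintro z ⟨hzb, hzS⟩
  have hPz : P z ≠ 0 := prodNeZero fun w hw => fun h => hzS (h ▸ hMmem w hw)
  have hGz : G z = P z * f z := by rw [hGdef]; simp [hzS, hFdef]
  have h2 := (hHfac z).symm.trans hGz
  exact mul_right_cancel₀ hPz (h2.trans (mul_comm _ _))
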